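/- Let k be a positive integer and let D_v, A_v be probability density functions (or distributions) on [0,1]-valued random variables indexed by v in a probability space (V, μ), such that ∫_v (∫ D_v^k dA_v) dμ ≤ 1/(k+1) and for every v, ∫ A_v^k dA_v = 1/(k+1). Then ∫_v (∫ D_v dA_v^k) dμ = ∫_v (∫ k · D_v · A_v^{k−1} dA_v) dμ ≤ k/(k+1). -/

import Mathlib

open MeasureTheory

lemma amgm_aux (k : ℕ) (hk : 1 ≤ k) {a b : ℝ} (ha : 0 ≤ a) (hb : 0 ≤ b) :
    (k:ℝ) * a * b^(k-1) ≤ a^k + ((k:ℝ)-1) * b^k := by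
  have hk0 : (0:ℝ) < k := by exact_mod_cast hk
  have h := Real.geom_mean_le_arith_mean2_weighted
    (w₁ := 1/(k:ℝ)) (w₂ := ((k:ℝ)-1)/k) (p₁ := a^k) (p₂ := b^k)
    (by positivity) (by
      apply div_nonneg _ hk0.le
      have : (1:ℝ) ≤ k := by exact_mod_cast hk
      linarith) (by positivity) (by positivity) (by field_simp; ring)
  have e1 : (a^k : ℝ) ^ ((1:ℝ)/k) = a := by
    rw [← Real.rpow_natCast a k, ← Real.rpow_mul ha]
    rw [mul_one_div, div_self hk0.ne', Real.rpow_one]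
  have e2 : (b^k : ℝ) ^ (((k:ℝ)-1)/k) = b^(k-1) := by
    rw [← Real.rpow_natCast b k, ← Real.rpow_mul hb]
    rw [show (k:ℝ) * (((k:ℝ)-1)/k) = ((k-1 : ℕ) : ℝ) by
      push_cast [Nat.cast_sub hk]; field_simp]
    exact Real.rpow_natCast b (k-1)
  rw [e1, e2] at h
  have := mul_le_mul_of_nonneg_left h hk0.le
  calc (k:ℝ) * a * b^(k-1) = (k:ℝ) * (a * b^(k-1)) := by ring
    _ ≤ (k:ℝ) * (1/(k:ℝ) * a^k + ((k:ℝ)-1)/k * b^k) := this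
    _ = a^k + ((k:ℝ)-1) * b^k := by field_simp

/-- The analytic core of "stable k-lotteries are stable defensive k-lotteries":
given `∫_v ∫ D_v^k dA_v dμ ≤ 1/(k+1)` and `∫ A_v^k dA_v = 1/(k+1)` for all `v`,
we have `∫_v ∫ k·D_v·A_v^{k−1} dA_v dμ ≤ k/(k+1)` (Hölder + Jensen). Here `ν v`
is the distribution `A_v`, and `A v` its CDF-type function. -/
theorem stmt4 {V : Type*} [MeasurableSpace V] (μ : Measure V) [IsProbabilityMeasure μ]
    (k : ℕ) (hk : 1 ≤ k)
    (ν : V → Measure ℝ) (hν : ∀ v, IsProbabilityMeasure (ν v))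
    (D A : V → ℝ → ℝ)
    (hD01 : ∀ v x, D v x ∈ Set.Icc (0:ℝ) 1)
    (hA01 : ∀ v x, A v x ∈ Set.Icc (0:ℝ) 1)
    (hDm : ∀ v, Measurable (D v)) (hAm : ∀ v, Measurable (A v))
    (h1 : ∫ v, (∫ x, (D v x)^k ∂(ν v)) ∂μ ≤ 1/((k:ℝ)+1))
    (h2 : ∀ v, ∫ x, (A v x)^k ∂(ν v) = 1/((k:ℝ)+1))
    (hint : Integrable (fun v => ∫ x, (k:ℝ) * D v x * (A v x)^(k-1) ∂(ν v)) μ)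
    (hint1 : Integrable (fun v => ∫ x, (D v x)^k ∂(ν v)) μ) :
    ∫ v, (∫ x, (k:ℝ) * D v x * (A v x)^(k-1) ∂(ν v)) ∂μ ≤ (k:ℝ)/((k:ℝ)+1) := by
  have hkp : (0:ℝ) < (k:ℝ)+1 := by positivity
  -- inner inequality for each v
  have key : ∀ v, (∫ x, (k:ℝ) * D v x * (A v x)^(k-1) ∂(ν v))
      ≤ (∫ x, (D v x)^k ∂(ν v)) + ((k:ℝ)-1)/((k:ℝ)+1) := by
    intro v
    haveI := hν v
    have hDnn : ∀ x, 0 ≤ D v x := fun x => (hD01 v x).1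
    have hAnn : ∀ x, 0 ≤ A v x := fun x => (hA01 v x).1
    have int1 : Integrable (fun x => (k:ℝ) * D v x * (A v x)^(k-1)) (ν v) := by
      apply (integrable_const ((k:ℝ))).mono'
        ((measurable_const.mul (hDm v)).mul ((hAm v).pow_const _)).aestronglyMeasurable
      filter_upwards with x
      simp only [Pi.mul_apply]
      rw [Real.norm_eq_abs, abs_of_nonneg (mul_nonneg (mul_nonneg (by positivity) (hDnn x)) (pow_nonneg (hAnn x) _))]
      have h1' := (hD01 v x).2
      have h2' : (A v x)^(k-1) ≤ 1 := pow_le_one₀ (hAnn x) (hA01 v x).2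
      calc (k:ℝ) * D v x * (A v x)^(k-1) ≤ (k:ℝ) * 1 * 1 := by
            apply mul_le_mul _ h2' (pow_nonneg (hAnn x) _) (by positivity)
            exact mul_le_mul_of_nonneg_left h1' (by positivity)
        _ = (k:ℝ) := by ring
    have int2 : Integrable (fun x => (D v x)^k) (ν v) := by
      apply (integrable_const (1:ℝ)).mono' ((hDm v).pow_const _).aestronglyMeasurable
      filter_upwards with x
      rw [Real.norm_eq_abs, abs_of_nonneg (pow_nonneg (hDnn x) _)]
      exact pow_le_one₀ (hDnn x) (hD01 v x).2
    have int3 : Integrable (fun x => (A v x)^k) (ν v) := by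
      apply (integrable_const (1:ℝ)).mono' ((hAm v).pow_const _).aestronglyMeasurable
      filter_upwards with x
      rw [Real.norm_eq_abs, abs_of_nonneg (pow_nonneg (hAnn x) _)]
      exact pow_le_one₀ (hAnn x) (hA01 v x).2
    calc ∫ x, (k:ℝ) * D v x * (A v x)^(k-1) ∂(ν v)
        ≤ ∫ x, ((D v x)^k + ((k:ℝ)-1) * (A v x)^k) ∂(ν v) := by
          apply integral_mono int1 (int2.add (int3.const_mul _))
          intro x
          exact amgm_aux k hk (hDnn x) (hAnn x)
      _ = (∫ x, (D v x)^k ∂(ν v)) + ((k:ℝ)-1) * ∫ x, (A v x)^k ∂(ν v) := by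
          rw [integral_add int2 (int3.const_mul _), integral_const_mul]
      _ = (∫ x, (D v x)^k ∂(ν v)) + ((k:ℝ)-1)/((k:ℝ)+1) := by
          rw [h2 v]; ring
  calc ∫ v, (∫ x, (k:ℝ) * D v x * (A v x)^(k-1) ∂(ν v)) ∂μ
      ≤ ∫ v, ((∫ x, (D v x)^k ∂(ν v)) + ((k:ℝ)-1)/((k:ℝ)+1)) ∂μ :=
        integral_mono hint (hint1.add (integrable_const _)) key
    _ = (∫ v, (∫ x, (D v x)^k ∂(ν v)) ∂μ) + ((k:ℝ)-1)/((k:ℝ)+1) := by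
        rw [integral_add hint1 (integrable_const _), integral_const]
        simp
    _ ≤ 1/((k:ℝ)+1) + ((k:ℝ)-1)/((k:ℝ)+1) := by linarith
    _ = (k:ℝ)/((k:ℝ)+1) := by field_simp; ring
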